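/- Let n ≥ 1, 1 ≤ p < ∞ and L > 0. There exists a constant C > 0 such that for every τ > 0 and every y ∈ ℝⁿ with |y| ≤ L + 1, one has (∫_{{|x| > L+2}} |∇ₓ G(τ, x − y)|^p dx)^{1/p} ≤ C (1 + τ)^{−(n+1)/2 + n/(2p)}. -/

import Mathlib

open MeasureTheory ENNReal

/-- The Gaussian heat kernel `G(t,x) = (4πt)^{-n/2} exp(-|x|²/(4t))` on `ℝⁿ`. -/
noncomputable def heatKernel (n : ℕ) (t : ℝ) (x : EuclideanSpace ℝ (Fin n)) : ℝ :=
  (4 * Real.pi * t) ^ (-(n : ℝ) / 2) * Real.exp (-‖x‖ ^ 2 / (4 * t))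

lemma norm_fderiv_heatKernel (n : ℕ) {τ : ℝ} (hτ : 0 < τ) (z : EuclideanSpace ℝ (Fin n)) :
    ‖fderiv ℝ (heatKernel n τ) z‖
      = (4 * Real.pi * τ) ^ (-(n : ℝ) / 2) * Real.exp (-‖z‖ ^ 2 / (4 * τ)) * (‖z‖ / (2 * τ)) := by
  set c : ℝ := (4 * Real.pi * τ) ^ (-(n : ℝ) / 2) with hc
  have h1 : HasFDerivAt (fun x : EuclideanSpace ℝ (Fin n) => ‖x‖ ^ 2)
      (2 • (innerSL ℝ z)) z := (hasStrictFDerivAt_norm_sq z).hasFDerivAt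
  have h2 : HasFDerivAt (fun x : EuclideanSpace ℝ (Fin n) => (-(4 * τ)⁻¹) * ‖x‖ ^ 2)
      ((-(4 * τ)⁻¹) • (2 • (innerSL ℝ z))) z := h1.const_mul _
  have h4 := (h2.exp).const_mul c
  have hfun : heatKernel n τ
      = fun x : EuclideanSpace ℝ (Fin n) => c * Real.exp (-(4 * τ)⁻¹ * ‖x‖ ^ 2) := by
    funext x
    unfold heatKernel
    rw [← hc]
    ring_nf
  rw [hfun, h4.fderiv]
  rw [norm_smul, norm_smul, norm_smul, show (2:ℕ) • (innerSL ℝ) z = (2:ℝ) • (innerSL ℝ) z from by rw [two_smul, two_smul], norm_smul, innerSL_apply_norm]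
  have hτ' : (0:ℝ) < 4 * τ := by linarith
  rw [Real.norm_eq_abs, Real.norm_eq_abs, Real.norm_eq_abs]
  rw [abs_of_pos (by positivity : (0:ℝ) < c), abs_of_pos (Real.exp_pos _)]
  rw [abs_neg, abs_inv, abs_of_pos hτ']
  have he : (-(4 * τ)⁻¹) * ‖z‖ ^ 2 = -‖z‖ ^ 2 / (4 * τ) := by ring
  rw [he, (by norm_num : ‖(2:ℝ)‖ = 2)]
  field_simp
  ring


/-- `r e^{-r²/(16τ)} ≤ 16 √τ`. -/
lemma aux_mul_exp (τ r : ℝ) (hτ : 0 < τ) (hr : 0 ≤ r) :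
    r * Real.exp (-(r ^ 2 / (16 * τ))) ≤ 16 * Real.sqrt τ := by
  have hs : 0 < Real.sqrt τ := Real.sqrt_pos.mpr hτ
  rcases le_or_gt r (Real.sqrt τ) with h | h
  · calc r * Real.exp (-(r ^ 2 / (16 * τ))) ≤ r * 1 := by
          have : Real.exp (-(r ^ 2 / (16 * τ))) ≤ 1 := Real.exp_le_one_iff.mpr (neg_nonpos.mpr (by positivity))
          exact mul_le_mul_of_nonneg_left this hr
      _ = r := mul_one r
      _ ≤ 16 * Real.sqrt τ := by linarith
  · have hr0 : 0 < r := hs.trans h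
    have hx : 0 < r ^ 2 / (16 * τ) := by positivity
    have hE : Real.exp (-(r ^ 2 / (16 * τ))) ≤ (r ^ 2 / (16 * τ))⁻¹ := by
      rw [Real.exp_neg]
      have hxe : r ^ 2 / (16 * τ) ≤ Real.exp (r ^ 2 / (16 * τ)) := by
        have := Real.add_one_le_exp (r ^ 2 / (16 * τ))
        linarith
      exact inv_anti₀ hx hxe
    have h1 : r * Real.exp (-(r ^ 2 / (16 * τ))) ≤ 16 * τ / r := by
      calc r * Real.exp (-(r ^ 2 / (16 * τ))) ≤ r * (r ^ 2 / (16 * τ))⁻¹ :=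
            mul_le_mul_of_nonneg_left hE hr0.le
        _ = 16 * τ / r := by field_simp
    refine h1.trans ?_
    rw [div_le_iff₀ hr0]
    have hττ : Real.sqrt τ * Real.sqrt τ = τ := Real.mul_self_sqrt hτ.le
    nlinarith


lemma aux_poly_exp (m : ℝ) (hm : 0 < m) (u : ℝ) (hu : 0 ≤ u) :
    (1 + u) ^ m ≤ (1 + 16 * m) ^ m * Real.exp (u / 16) := by
  have h1 : 1 + u ≤ (1 + 16 * m) * Real.exp (u / (16 * m)) := by
    have hE : 1 + u / (16 * m) ≤ Real.exp (u / (16 * m)) := by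
      have := Real.add_one_le_exp (u / (16 * m)); linarith
    have h2 : (1 + 16 * m) * (1 + u / (16 * m)) ≤ (1 + 16 * m) * Real.exp (u / (16 * m)) :=
      mul_le_mul_of_nonneg_left hE (by linarith)
    refine le_trans ?_ h2
    have : (1 + 16 * m) * (1 + u / (16 * m)) = 1 + 16 * m + u / (16 * m) + u := by
      field_simp; ring
    rw [this]
    have : 0 ≤ u / (16 * m) := by positivity
    linarith
  calc (1 + u) ^ m ≤ ((1 + 16 * m) * Real.exp (u / (16 * m))) ^ m :=
        Real.rpow_le_rpow (by linarith) h1 hm.le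
    _ = (1 + 16 * m) ^ m * Real.exp (u / (16 * m)) ^ m :=
        Real.mul_rpow (by linarith) (Real.exp_pos _).le
    _ = (1 + 16 * m) ^ m * Real.exp (u / 16) := by
        rw [← Real.exp_mul]
        congr 1
        field_simp

lemma keybound (n : ℕ) (hn : 1 ≤ n) {τ : ℝ} (hτ : 0 < τ) {r : ℝ} (hr : 1 ≤ r) :
    (4 * Real.pi * τ) ^ (-(n : ℝ) / 2) * Real.exp (-r ^ 2 / (4 * τ)) * (r / (2 * τ))
      ≤ (8 * (4 * Real.pi) ^ (-(n : ℝ) / 2) * (1 + 16 * (((n : ℝ) + 1) / 2)) ^ (((n : ℝ) + 1) / 2))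
        * (1 + τ) ^ (-(((n : ℝ) + 1) / 2)) * Real.exp (-(r ^ 2 / (8 * (1 + τ)))) := by
  have hπ : 0 < Real.pi := Real.pi_pos
  set m : ℝ := ((n : ℝ) + 1) / 2 with hm
  have hm0 : 0 < m := by positivity
  set K : ℝ := (1 + 16 * m) ^ m with hK
  have hK0 : 0 < K := Real.rpow_pos_of_pos (by linarith) m
  have hr0 : (0:ℝ) ≤ r := by linarith
  set c : ℝ := (4 * Real.pi * τ) ^ (-(n : ℝ) / 2) with hc
  have hc0 : 0 < c := Real.rpow_pos_of_pos (by positivity) _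
  have e1 : Real.exp (-r ^ 2 / (4 * τ))
      = Real.exp (-(r ^ 2 / (16 * τ))) * Real.exp (-(r ^ 2 / (16 * τ)))
        * Real.exp (-(r ^ 2 / (8 * τ))) := by
    rw [← Real.exp_add, ← Real.exp_add]
    congr 1
    field_simp
    ring
  have e2 : Real.exp (-(r ^ 2 / (16 * τ))) ≤ Real.exp (-(1 / (16 * τ))) := by
    apply Real.exp_le_exp.mpr
    apply neg_le_neg
    gcongr
    nlinarith
  have e3 : Real.exp (-(r ^ 2 / (8 * τ))) ≤ Real.exp (-(r ^ 2 / (8 * (1 + τ)))) := by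
    apply Real.exp_le_exp.mpr
    apply neg_le_neg
    gcongr
    all_goals first | positivity | linarith | nlinarith
  have e4 := aux_mul_exp τ r hτ hr0
  have step1 : c * Real.exp (-r ^ 2 / (4 * τ)) * (r / (2 * τ))
      ≤ c * (1 / (2 * τ)) * ((16 * Real.sqrt τ) * Real.exp (-(1 / (16 * τ)))
          * Real.exp (-(r ^ 2 / (8 * (1 + τ))))) := by
    rw [e1, show c * (Real.exp (-(r ^ 2 / (16 * τ))) * Real.exp (-(r ^ 2 / (16 * τ)))
        * Real.exp (-(r ^ 2 / (8 * τ)))) * (r / (2 * τ))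
      = c * (1 / (2 * τ)) * ((r * Real.exp (-(r ^ 2 / (16 * τ))))
          * Real.exp (-(r ^ 2 / (16 * τ))) * Real.exp (-(r ^ 2 / (8 * τ)))) from by ring]
    gcongr
    all_goals positivity
  -- the scalar bound
  have hsqrt : Real.sqrt τ = τ ^ (1/2 : ℝ) := Real.sqrt_eq_rpow τ
  have hcc : c = (4 * Real.pi) ^ (-(n : ℝ) / 2) * τ ^ (-(n : ℝ) / 2) := by
    rw [hc, Real.mul_rpow (by positivity) hτ.le]
  have hpow : τ ^ (-(n : ℝ) / 2) * (1 / (2 * τ)) * (16 * Real.sqrt τ) = 8 * τ ^ (-m) := by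
    rw [hsqrt]
    rw [show (1 : ℝ) / (2 * τ) = (2:ℝ)⁻¹ * τ ^ (-1 : ℝ) from by
      rw [Real.rpow_neg_one]; field_simp]
    rw [show τ ^ (-(n:ℝ)/2) * ((2:ℝ)⁻¹ * τ ^ (-1:ℝ)) * (16 * τ ^ (1/2:ℝ))
      = 8 * (τ ^ (-(n:ℝ)/2) * τ ^ (-1:ℝ) * τ ^ (1/2:ℝ)) from by ring]
    rw [← Real.rpow_add hτ, ← Real.rpow_add hτ]
    congr 1
    rw [hm]
    ring
  have hmain : τ ^ (-m) * Real.exp (-(1 / (16 * τ))) ≤ K * (1 + τ) ^ (-m) := by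
    have hdiv : ((1 + τ) / τ) ^ m ≤ K * Real.exp (1 / (16 * τ)) := by
      have h0 : (1 + τ) / τ = 1 + 1/τ := by field_simp; ring
      have h1 : (1/τ) / 16 = 1 / (16 * τ) := by ring
      rw [h0, ← h1]
      exact aux_poly_exp m hm0 (1/τ) (by positivity)
    rw [Real.div_rpow (by linarith) hτ.le] at hdiv
    have hT : (0:ℝ) < τ ^ m := Real.rpow_pos_of_pos hτ m
    have hP : (0:ℝ) < (1 + τ) ^ m := Real.rpow_pos_of_pos (by linarith) m
    have hE : (0:ℝ) < Real.exp (1 / (16 * τ)) := Real.exp_pos _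
    have hPle : (1 + τ) ^ m ≤ K * Real.exp (1 / (16 * τ)) * τ ^ m :=
      (div_le_iff₀ hT).mp hdiv
    rw [Real.rpow_neg hτ.le, Real.rpow_neg (by linarith : (0:ℝ) ≤ 1 + τ), Real.exp_neg]
    calc (τ ^ m)⁻¹ * (Real.exp (1 / (16 * τ)))⁻¹
        = K * (K * Real.exp (1 / (16 * τ)) * τ ^ m)⁻¹ := by
          field_simp
      _ ≤ K * ((1 + τ) ^ m)⁻¹ := by gcongr
  have step2 : c * (1 / (2 * τ)) * ((16 * Real.sqrt τ) * Real.exp (-(1 / (16 * τ))))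
      ≤ 8 * (4 * Real.pi) ^ (-(n : ℝ) / 2) * K * (1 + τ) ^ (-m) := by
    rw [hcc]
    rw [show (4 * Real.pi) ^ (-(n:ℝ)/2) * τ ^ (-(n:ℝ)/2) * (1 / (2 * τ))
        * (16 * Real.sqrt τ * Real.exp (-(1 / (16 * τ))))
      = (4 * Real.pi) ^ (-(n:ℝ)/2) * (τ ^ (-(n:ℝ)/2) * (1 / (2 * τ)) * (16 * Real.sqrt τ))
        * Real.exp (-(1 / (16 * τ))) from by ring]
    rw [hpow]
    rw [show (4 * Real.pi) ^ (-(n:ℝ)/2) * (8 * τ ^ (-m)) * Real.exp (-(1 / (16 * τ)))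
      = 8 * (4 * Real.pi) ^ (-(n:ℝ)/2) * (τ ^ (-m) * Real.exp (-(1 / (16 * τ)))) from by ring]
    rw [show (8:ℝ) * (4 * Real.pi) ^ (-(n:ℝ)/2) * K * (1 + τ) ^ (-m)
      = 8 * (4 * Real.pi) ^ (-(n:ℝ)/2) * (K * (1 + τ) ^ (-m)) from by ring]
    gcongr
  calc c * Real.exp (-r ^ 2 / (4 * τ)) * (r / (2 * τ))
      ≤ c * (1 / (2 * τ)) * ((16 * Real.sqrt τ) * Real.exp (-(1 / (16 * τ)))
          * Real.exp (-(r ^ 2 / (8 * (1 + τ))))) := step1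
    _ = (c * (1 / (2 * τ)) * ((16 * Real.sqrt τ) * Real.exp (-(1 / (16 * τ)))))
          * Real.exp (-(r ^ 2 / (8 * (1 + τ)))) := by ring
    _ ≤ (8 * (4 * Real.pi) ^ (-(n : ℝ) / 2) * K * (1 + τ) ^ (-m))
          * Real.exp (-(r ^ 2 / (8 * (1 + τ)))) := by
          gcongr
    _ = 8 * (4 * Real.pi) ^ (-(n : ℝ) / 2) * K * (1 + τ) ^ (-m)
          * Real.exp (-(r ^ 2 / (8 * (1 + τ)))) := by ring


/-- For `|y| ≤ L+1`, the `L^p`-norm (in `x`) of `∇ₓ G(τ, x-y)` over `{|x| > L+2}`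
is bounded by `C (1+τ)^{-(n+1)/2 + n/(2p)}`. -/
theorem heat_kernel_gradient_Lp_away_bound (n : ℕ) (hn : 1 ≤ n)
    (p : ℝ) (hp : 1 ≤ p) (L : ℝ) (hL : 0 < L) :
    ∃ C : ℝ, 0 < C ∧ ∀ τ : ℝ, 0 < τ → ∀ y : EuclideanSpace ℝ (Fin n), ‖y‖ ≤ L + 1 →
      (∫ x in {x : EuclideanSpace ℝ (Fin n) | L + 2 < ‖x‖},
          ‖fderiv ℝ (heatKernel n τ) (x - y)‖ ^ p) ^ (1 / p)
        ≤ C * (1 + τ) ^ (-((n : ℝ) + 1) / 2 + n / (2 * p)) := by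
  have hπ : 0 < Real.pi := Real.pi_pos
  have hp0 : 0 < p := lt_of_lt_of_le one_pos hp
  set m : ℝ := ((n : ℝ) + 1) / 2 with hm
  have hm0 : 0 < m := by positivity
  set A : ℝ := 8 * (4 * Real.pi) ^ (-(n : ℝ) / 2) * (1 + 16 * m) ^ m with hA
  have hA0 : 0 < A := by positivity
  set C : ℝ := (A ^ p * (8 * Real.pi / p) ^ ((n : ℝ) / 2)) ^ (1/p) with hC
  have hC0 : 0 < C := by positivity
  refine ⟨C, hC0, ?_⟩
  intro τ hτ y hy
  set S : Set (EuclideanSpace ℝ (Fin n)) := {x | L + 2 < ‖x‖} with hS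
  have hb : 0 < p / (8 * (1 + τ)) := by positivity
  set b : ℝ := p / (8 * (1 + τ)) with hbdef
  set g : EuclideanSpace ℝ (Fin n) → ℝ :=
    fun x => (A * (1 + τ) ^ (-m)) ^ p * Real.exp (-(b * ‖x - y‖ ^ 2)) with hg
  have h1τ : (0:ℝ) < 1 + τ := by linarith
  have hAm0 : 0 < A * (1 + τ) ^ (-m) := by positivity
  -- pointwise bound on S
  have h_ptwise : ∀ x ∈ S, ‖fderiv ℝ (heatKernel n τ) (x - y)‖ ^ p ≤ g x := by
    intro x hx
    have hx' : L + 2 < ‖x‖ := hx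
    have hz : 1 ≤ ‖x - y‖ := by
      have := norm_sub_norm_le x y
      linarith
    have hnorm := norm_fderiv_heatKernel n hτ (x - y)
    have hkb := keybound n hn hτ hz
    have hle : ‖fderiv ℝ (heatKernel n τ) (x - y)‖
        ≤ A * (1 + τ) ^ (-m) * Real.exp (-(‖x - y‖ ^ 2 / (8 * (1 + τ)))) := by
      rw [hnorm]; exact hkb
    have h2 : ‖fderiv ℝ (heatKernel n τ) (x - y)‖ ^ p
        ≤ (A * (1 + τ) ^ (-m) * Real.exp (-(‖x - y‖ ^ 2 / (8 * (1 + τ))))) ^ p :=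
      Real.rpow_le_rpow (norm_nonneg _) hle hp0.le
    refine h2.trans_eq ?_
    rw [hg]
    rw [Real.mul_rpow hAm0.le (Real.exp_pos _).le, ← Real.exp_mul]
    congr 2
    rw [hbdef]
    field_simp
  -- integrability of the dominating function
  have hgint : Integrable g volume := by
    have h : Integrable (fun v : EuclideanSpace ℝ (Fin n) =>
        Real.exp (-(b * ‖v‖ ^ 2))) volume := by
      have h := (GaussianFourier.integrable_cexp_neg_mul_sq_norm_add
        (V := EuclideanSpace ℝ (Fin n)) (b := (b:ℂ)) (by simpa using hb) 0 0).norm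
      simpa [Complex.norm_exp, neg_mul, ← Complex.ofReal_pow] using h
    exact (h.comp_sub_right y).const_mul _
  have hSmeas : MeasurableSet S :=
    (isOpen_lt continuous_const continuous_norm).measurableSet
  -- integral bound
  have hI1 : (∫ x in S, ‖fderiv ℝ (heatKernel n τ) (x - y)‖ ^ p) ≤ ∫ x in S, g x := by
    refine integral_mono_of_nonneg ?_ (hgint.restrict) ?_
    · exact Filter.Eventually.of_forall fun x => Real.rpow_nonneg (norm_nonneg _) p
    · exact (ae_restrict_iff' hSmeas).mpr (Filter.Eventually.of_forall h_ptwise)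
  have hI2 : (∫ x in S, g x) ≤ ∫ x, g x := by
    refine setIntegral_le_integral hgint ?_
    exact Filter.Eventually.of_forall fun x => by positivity
  have hI3 : (∫ x, g x) = (A * (1 + τ) ^ (-m)) ^ p * (Real.pi / b) ^ ((n:ℝ) / 2) := by
    rw [hg, integral_const_mul]
    congr 1
    rw [integral_sub_right_eq_self (fun v => Real.exp (-(b * ‖v‖ ^ 2))) y]
    have h := GaussianFourier.integral_rexp_neg_mul_sq_norm
      (V := EuclideanSpace ℝ (Fin n)) hb
    rw [finrank_euclideanSpace_fin] at h
    simpa [neg_mul] using h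
  -- putting it together
  have hDval : (A * (1 + τ) ^ (-m)) ^ p * (Real.pi / b) ^ ((n:ℝ) / 2)
      = (A ^ p * (8 * Real.pi / p) ^ ((n : ℝ) / 2)) * (1 + τ) ^ (-m * p + (n:ℝ)/2) := by
    have h1 : Real.pi / b = (8 * Real.pi / p) * (1 + τ) := by
      rw [hbdef]; field_simp
    rw [h1, Real.mul_rpow (by positivity) h1τ.le,
      Real.mul_rpow hA0.le (by positivity : (0:ℝ) ≤ (1 + τ) ^ (-m)),
      ← Real.rpow_mul h1τ.le, Real.rpow_add h1τ]
    ring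
  have hIle : (∫ x in S, ‖fderiv ℝ (heatKernel n τ) (x - y)‖ ^ p)
      ≤ (A ^ p * (8 * Real.pi / p) ^ ((n : ℝ) / 2)) * (1 + τ) ^ (-m * p + (n:ℝ)/2) := by
    rw [← hDval, ← hI3]
    exact hI1.trans hI2
  have hInonneg : (0:ℝ) ≤ ∫ x in S, ‖fderiv ℝ (heatKernel n τ) (x - y)‖ ^ p :=
    integral_nonneg fun x => Real.rpow_nonneg (norm_nonneg _) p
  have hfinal : (∫ x in S, ‖fderiv ℝ (heatKernel n τ) (x - y)‖ ^ p) ^ (1/p)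
      ≤ ((A ^ p * (8 * Real.pi / p) ^ ((n : ℝ) / 2)) * (1 + τ) ^ (-m * p + (n:ℝ)/2)) ^ (1/p) :=
    Real.rpow_le_rpow hInonneg hIle (by positivity)
  refine hfinal.trans_eq ?_
  rw [Real.mul_rpow (by positivity) (by positivity), ← hC,
    ← Real.rpow_mul h1τ.le]
  congr 1
  rw [hm]
  field_simp
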